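/- Let (U,V) be a pair of square-integrable real random variables such that U and V each have a probability density bounded by M > 0, and such that the pair is quasi-associated in the sense that for all Lipschitz functions f, g : ℝ → ℝ, |Cov(f(U), g(V))| ≤ Lip(f)·Lip(g)·|Cov(U,V)|. Then for all u, v ∈ ℝ, |Cov(1{U ≥ u}, 1{V ≥ v})| ≤ 3 M^{2/3} |Cov(U,V)|^{1/3}. -/

import Mathlib

open MeasureTheory ProbabilityTheory Filter Set
open scoped ENNReal NNReal Topology Pointwise RealInnerProductSpace

noncomputable section

abbrev Euc (d : ℕ) : Type := EuclideanSpace ℝ (Fin d)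

def unitCube (d : ℕ) : Set (Euc d) := {t | ∀ i, t i ∈ Set.Icc (0 : ℝ) 1}

def basisVec (d : ℕ) (j : Fin d) : Euc d := EuclideanSpace.single j (1 : ℝ)

def betaD (d : ℕ) : ℝ :=
  2 * Real.sqrt Real.pi * Real.Gamma (((d : ℝ) + 1) / 2) / Real.Gamma ((d : ℝ) / 2)

variable {Ω : Type*} [MeasurableSpace Ω] {d : ℕ}

def IsStationaryField (P : Measure Ω) (X : Ω → Euc d → ℝ) : Prop :=
  ∀ v : Euc d,
    Measure.map (fun ω => (fun t => X ω (t + v))) P = Measure.map (fun ω => X ω) P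

def IsIsotropicField (P : Measure Ω) (X : Ω → Euc d → ℝ) : Prop :=
  ∀ R : Euc d ≃ₗᵢ[ℝ] Euc d,
    Measure.map (fun ω => (fun t => X ω (R t))) P = Measure.map (fun ω => X ω) P

structure AssumptionA0 (P : Measure Ω) (X : Ω → Euc d → ℝ) : Prop where
  stationary : IsStationaryField P X
  meas : ∀ t : Euc d, Measurable fun ω => X ω t
  posVariance : 0 < variance (fun ω => X ω 0) P
  memL2 : MemLp (fun ω => X ω 0) 2 P
  smooth : ∀ᵐ ω ∂P, ContDiff ℝ 2 (X ω)
  jointDensityBounded : ∃ C : ℝ≥0∞, C ≠ ⊤ ∧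
    Measure.map (fun ω => (X ω 0, gradient (X ω) 0)) P ≤ C • (volume : Measure (ℝ × Euc d))

def surfaceDensity (P : Measure Ω) (X : Ω → Euc d → ℝ) (u : ℝ) : ℝ :=
  (∫⁻ ω, μH[(d : ℝ) - 1] {t ∈ unitCube d | X ω t = u} ∂P).toReal

def AssumptionA1 (P : Measure Ω) [IsFiniteMeasure P] (X : Ω → Euc d → ℝ) (w : Euc d) : Prop :=
  (∃ M : ℝ≥0∞, M ≠ ⊤ ∧
    condDistrib (fun ω => X ω 0) (fun ω => deriv (fun t : ℝ => X ω (t • w)) 0) P 0 ≤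
      M • (volume : Measure ℝ)) ∧
  MemLp (fun ω => ⨆ t ∈ Set.Icc (0 : ℝ) 1, |deriv (deriv fun s : ℝ => X ω (s • w)) t|) 2 P

def AssumptionA2 (P : Measure Ω) (X : Ω → Euc d → ℝ) (u : ℝ) (w : Euc d) (ε : ℝ) : Prop :=
  ∫⁻ ω, (Measure.count {lam : ℝ | X ω (lam • w) = u ∧ lam • w ∈ unitCube d}) ^ (1 / ε) ∂P < ⊤

def Wfun (X : Euc d → ℝ) (j : Fin d) : ℝ :=
  ⨆ t ∈ unitCube d, ⨆ k : Fin d,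
    max |fderiv ℝ X t (basisVec d k)|
        |fderiv ℝ (fun s => fderiv ℝ X s (basisVec d j)) t (basisVec d k)|

def AssumptionA3 (P : Measure Ω) [IsFiniteMeasure P] (X : Ω → Euc d → ℝ) (u : ℝ) (j : Fin d) :
    Prop :=
  (∃ U ∈ nhds ((u, 0) : ℝ × ℝ),
    (∃ M : ℝ≥0∞, M ≠ ⊤ ∧ ∀ s : Set (ℝ × ℝ), s ⊆ U →
      Measure.map (fun ω => (X ω 0, fderiv ℝ (X ω) 0 (basisVec d j))) P s ≤ M * volume s) ∧
    ∀ x ∈ U, (∫⁻ w, ENNReal.ofReal (w ^ 2)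
        ∂(condDistrib (fun ω => Wfun (X ω) j)
            (fun ω => (X ω 0, fderiv ℝ (X ω) 0 (basisVec d j))) P x)) < ⊤) ∧
  (∃ a b : ℝ, a < u ∧ u < b ∧
    (∃ M : ℝ≥0∞, M ≠ ⊤ ∧ ∀ s : Set ℝ, s ⊆ Set.Ioo a b →
      Measure.map (fun ω => X ω 0) P s ≤ M * volume s) ∧
    ∀ x ∈ Set.Ioo a b, (∫⁻ w, ENNReal.ofReal w
        ∂(condDistrib (fun ω => ⨆ t ∈ unitCube d, ‖gradient (X ω) t‖)
            (fun ω => X ω 0) P x)) < ⊤)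

def fieldSigma (X : Ω → Euc d → ℝ) (U : Set (Euc d)) : MeasurableSpace Ω :=
  ⨆ t ∈ U, MeasurableSpace.comap (fun ω => X ω t) inferInstance

def mixingCoef (P : Measure Ω) (X : Ω → Euc d → ℝ) (s : ℝ) : ℝ :=
  sSup {x : ℝ | ∃ U V : Set (Euc d),
    (ENNReal.ofReal s < ⨅ (p : Euc d) (_ : p ∈ U) (q : Euc d) (_ : q ∈ V), edist p q) ∧
    ∃ A B : Set Ω, MeasurableSet[fieldSigma X U] A ∧ MeasurableSet[fieldSigma X V] B ∧
      x = |(P (A ∩ B)).toReal - (P A).toReal * (P B).toReal|}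

def covP (P : Measure Ω) (F G : Ω → ℝ) : ℝ :=
  (∫ ω, F ω * G ω ∂P) - (∫ ω, F ω ∂P) * (∫ ω, G ω ∂P)

def Ctilde (T : Set (Euc d)) (f : Euc d → ℝ) (u : ℝ) : ℝ :=
  (∫ s in {t ∈ T | f t = u}, (∑ i : Fin d, |gradient f s i|) / ‖gradient f s‖
      ∂(μH[(d : ℝ) - 1] : Measure (Euc d))) / (volume T).toReal

def CvolT (T : Set (Euc d)) (f : Euc d → ℝ) (u : ℝ) : ℝ :=
  (volume {t ∈ T | u ≤ f t}).toReal / (volume T).toReal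

def CsurfT (T : Set (Euc d)) (f : Euc d → ℝ) (u : ℝ) : ℝ :=
  (μH[(d : ℝ) - 1] {t ∈ T | f t = u}).toReal / (volume T).toReal

def cubeT (d : ℕ) (a : ℝ) : Set (Euc d) := {t | ∀ k, t k ∈ Set.Icc (-a) a}

def IsHypercube (T : Set (Euc d)) : Prop :=
  ∃ (a : Euc d) (L : ℝ), 0 < L ∧ T = {t | ∀ i, t i ∈ Set.Icc (a i) (a i + L)}

def gridPt (d : ℕ) (δ : ℝ) (i : Fin d → ℤ) : Euc d :=
  ∑ k : Fin d, (δ * (i k : ℝ)) • basisVec d k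

def gridIdx (d : ℕ) (N : ℕ) : Finset (Fin d → ℤ) :=
  Finset.Icc (fun _ => -(N : ℤ)) (fun _ => (N : ℤ) - 1)

def ind (u x : ℝ) : ℝ := if u ≤ x then 1 else 0

def hypVolEst (X : Euc d → ℝ) (u δ : ℝ) (N : ℕ) : ℝ :=
  (δ ^ d / (2 * (N : ℝ) * δ) ^ d) * ∑ i ∈ gridIdx d N, ind u (X (gridPt d δ i))

def hypSurfEst (X : Euc d → ℝ) (u δ : ℝ) (N : ℕ) : ℝ :=
  (δ ^ (d - 1) / (2 * (N : ℝ) * δ) ^ d) *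
    ∑ j : Fin d, ∑ i ∈ gridIdx d N,
      if i j < (N : ℤ) - 1 then
        |ind u (X (gridPt d δ i)) -
          ind u (X (gridPt d δ (fun k => i k + if k = j then 1 else 0)))|
      else 0

structure PointRefHoneycomb (d : ℕ) where
  cells : Set (Set (Euc d))
  ref : Set (Euc d) → Euc d
  cellsConvex : ∀ P ∈ cells, Convex ℝ P
  cellsClosed : ∀ P ∈ cells, IsClosed P
  cellsPolytope : ∀ P ∈ cells, ∃ H : Finset (Euc d × ℝ), P = {x | ∀ h ∈ H, ⟪h.1, x⟫ ≤ h.2}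
  covers : ⋃₀ cells = Set.univ
  disjointInteriors : ∀ P ∈ cells, ∀ Q ∈ cells, P ≠ Q → interior P ∩ interior Q = ∅
  refMem : ∀ P ∈ cells, ref P ∈ P
  faceNormal : ∀ P ∈ cells, ∀ Q ∈ cells, P ≠ Q → 0 < μH[(d : ℝ) - 1] (P ∩ Q) →
    ∀ x ∈ P ∩ Q, ∀ y ∈ P ∩ Q, ⟪x - y, ref Q - ref P⟫ = 0

open Classical in
def scaledSurfEst (H : PointRefHoneycomb d) (δ : ℝ) (T : Set (Euc d))
    (X : Euc d → ℝ) (u : ℝ) : ℝ :=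
  (∑' P : H.cells, ∑' Q : H.cells,
    if P.1 ≠ Q.1 ∧ δ • P.1 ⊆ T ∧ δ • Q.1 ⊆ T ∧
        X (δ • H.ref P.1) ≤ u ∧ u < X (δ • H.ref Q.1)
    then μH[(d : ℝ) - 1] ((δ • P.1) ∩ (δ • Q.1)) else 0).toReal / (volume T).toReal

open Classical in
def honeycombVolEst (H : PointRefHoneycomb d) (T : Set (Euc d)) (X : Euc d → ℝ) (u : ℝ) : ℝ :=
  (∑' P : {P : Set (Euc d) // P ∈ H.cells ∧ P ⊆ T},
    if u ≤ X (H.ref P.1) then volume P.1 else 0).toReal / (volume T).toReal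

def voronoiCell (S : Set (Euc d)) (p : Euc d) : Set (Euc d) :=
  {x | ∀ q ∈ S, dist x p ≤ dist x q}

open Classical in
def voronoiSurfEst (S : Set (Euc d)) (δ : ℝ) (T : Set (Euc d)) (X : Euc d → ℝ) (u : ℝ) : ℝ :=
  (∑' p : S, ∑' q : S,
    if p.1 ≠ q.1 ∧ δ • voronoiCell S p.1 ⊆ T ∧ δ • voronoiCell S q.1 ⊆ T ∧
        X (δ • p.1) ≤ u ∧ u < X (δ • q.1)
    then μH[(d : ℝ) - 1] ((δ • voronoiCell S p.1) ∩ (δ • voronoiCell S q.1)) else 0).toReal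
    / (volume T).toReal

def QuasiAssociated (P : Measure Ω) (X : Ω → Euc d → ℝ) : Prop :=
  ∀ I J : Finset (Euc d), Disjoint I J →
    ∀ (f : (↥I → ℝ) → ℝ) (g : (↥J → ℝ) → ℝ) (Lf Lg : ℝ≥0),
      LipschitzWith Lf f → LipschitzWith Lg g →
      |covP P (fun ω => f fun s => X ω ↑s) (fun ω => g fun t => X ω ↑t)| ≤
        (Lf : ℝ) * (Lg : ℝ) * ∑ s ∈ I, ∑ t ∈ J, |covP P (fun ω => X ω s) (fun ω => X ω t)|


/-- clamp function -/
def fcl (w ε x : ℝ) : ℝ := min 1 (max 0 ((x - (w - ε)) / ε))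

def indf (w x : ℝ) : ℝ := if w ≤ x then 1 else 0

lemma indf_nonneg (w x : ℝ) : 0 ≤ indf w x := by unfold indf; split <;> norm_num

lemma indf_le_one (w x : ℝ) : indf w x ≤ 1 := by unfold indf; split <;> norm_num

lemma fcl_nonneg (w ε x : ℝ) : 0 ≤ fcl w ε x :=
  le_min one_pos.le (le_max_left _ _)

lemma fcl_le_one (w ε x : ℝ) : fcl w ε x ≤ 1 := min_le_left _ _

lemma fcl_eq_one {w ε x : ℝ} (hε : 0 < ε) (h : w ≤ x) : fcl w ε x = 1 := by
  have h1 : (1 : ℝ) ≤ (x - (w - ε)) / ε := by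
    rw [le_div_iff₀ hε]; linarith
  unfold fcl
  rw [max_eq_right (by linarith), min_eq_left h1]

lemma indf_le_fcl {w ε : ℝ} (hε : 0 < ε) (x : ℝ) : indf w x ≤ fcl w ε x := by
  unfold indf
  split
  · exact (fcl_eq_one hε ‹_›).ge
  · exact fcl_nonneg _ _ _

lemma fcl_sub_indf_le {w ε : ℝ} (hε : 0 < ε) (x : ℝ) :
    fcl w ε x - indf w x ≤ (Set.Ico (w - ε) w).indicator (fun _ => (1:ℝ)) x := by
  by_cases hx : x ∈ Set.Ico (w - ε) w
  · rw [Set.indicator_of_mem hx]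
    have := indf_nonneg w x
    have := fcl_le_one w ε x
    linarith
  · rw [Set.indicator_of_notMem hx]
    rcases le_or_gt w x with h | h
    · rw [fcl_eq_one hε h]
      unfold indf
      rw [if_pos h]
      norm_num
    · have h2 : x < w - ε := by
        by_contra h3
        exact hx ⟨le_of_not_gt h3, h⟩
      have hle : (x - (w - ε)) / ε ≤ 0 :=
        div_nonpos_of_nonpos_of_nonneg (by linarith) hε.le
      have hf : fcl w ε x = 0 := by
        unfold fcl; rw [max_eq_left hle, min_eq_right (by norm_num)]
      rw [hf]
      unfold indf
      rw [if_neg (by linarith)]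
      norm_num

lemma fcl_lipschitz {ε : ℝ} (hε : 0 < ε) (w : ℝ) :
    LipschitzWith (ε⁻¹).toNNReal (fcl w ε) := by
  have h1 : LipschitzWith (ε⁻¹).toNNReal (fun x : ℝ => (x - (w - ε)) / ε) := by
    apply LipschitzWith.of_dist_le_mul
    intro x y
    rw [Real.dist_eq, Real.dist_eq, div_sub_div_same, Real.coe_toNNReal _ (by positivity)]
    rw [abs_div, abs_of_pos hε, sub_sub_sub_cancel_right, div_eq_inv_mul]
  have h2 := (h1.max_const 0).min_const 1
  have h3 : fcl w ε = fun x => (max ((x - (w - ε)) / ε) 0) ⊓ 1 := by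
    funext x
    simp only [fcl, min_comm, max_comm]
  rw [h3]
  exact h2

lemma measurable_indf (w : ℝ) : Measurable (indf w) := by
  unfold indf
  exact Measurable.ite measurableSet_Ici measurable_const measurable_const

/-- Integrable helper -/
lemma integrable_of_bdd {P : Measure Ω} [IsProbabilityMeasure P] {F : Ω → ℝ}
    (h : AEStronglyMeasurable F P) (hb : ∀ ω, |F ω| ≤ 1) : Integrable F P :=
  (integrable_const (1:ℝ)).mono' h (Eventually.of_forall (by simpa [Real.norm_eq_abs] using hb))

lemma covP_eq (P : Measure Ω) [IsProbabilityMeasure P] (F G : Ω → ℝ)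
    (hFG : Integrable (fun ω => F ω * G ω) P) (hF : Integrable F P) :
    covP P F G = ∫ ω, F ω * (G ω - ∫ ω', G ω' ∂P) ∂P := by
  unfold covP
  have : ∀ ω, F ω * (G ω - ∫ ω', G ω' ∂P) = F ω * G ω - F ω * (∫ ω', G ω' ∂P) := by
    intro ω; ring
  simp_rw [this]
  rw [integral_sub hFG (hF.mul_const _), integral_mul_const]

lemma abs_covP_le (P : Measure Ω) [IsProbabilityMeasure P] (F G : Ω → ℝ)
    (hFG : Integrable (fun ω => F ω * G ω) P) (hF : Integrable F P)
    (hG : ∀ ω, |G ω - ∫ ω', G ω' ∂P| ≤ 1) :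
    |covP P F G| ≤ ∫ ω, |F ω| ∂P := by
  rw [covP_eq P F G hFG hF]
  set c := ∫ ω', G ω' ∂P with hc
  have hint : Integrable (fun ω => F ω * (G ω - c)) P := by
    apply (hFG.sub (hF.mul_const c)).congr
    apply Eventually.of_forall
    intro ω
    simp only [Pi.sub_apply]
    ring
  have int1 : Integrable (fun ω => |F ω| * |G ω - c|) P := by
    simpa [abs_mul] using hint.abs
  calc |∫ ω, F ω * (G ω - c) ∂P| ≤ ∫ ω, |F ω| * |G ω - c| ∂P := by
        simpa [Real.norm_eq_abs, abs_mul] using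
          norm_integral_le_integral_norm (μ := P) (fun ω => F ω * (G ω - c))
    _ ≤ ∫ ω, |F ω| ∂P := by
        apply integral_mono int1 hF.abs
        intro ω
        calc |F ω| * |G ω - c| ≤ |F ω| * 1 :=
              mul_le_mul_of_nonneg_left (hG ω) (abs_nonneg _)
          _ = |F ω| := mul_one _

lemma covP_comm (P : Measure Ω) (F G : Ω → ℝ) : covP P F G = covP P G F := by
  unfold covP
  simp_rw [mul_comm (F _) (G _)]
  ring

lemma covP_decomp (P : Measure Ω) [IsProbabilityMeasure P] (F F' G G' : Ω → ℝ)
    (hF : Integrable F P) (hF' : Integrable F' P) (hG : Integrable G P) (hG' : Integrable G' P)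
    (hFG : Integrable (fun ω => F ω * G ω) P)
    (hF'G : Integrable (fun ω => F' ω * G ω) P)
    (hF'G' : Integrable (fun ω => F' ω * G' ω) P) :
    covP P F G = covP P (fun ω => F ω - F' ω) G + covP P F' (fun ω => G ω - G' ω)
      + covP P F' G' := by
  unfold covP
  have h1 : ∫ ω, (F ω - F' ω) * G ω ∂P = (∫ ω, F ω * G ω ∂P) - ∫ ω, F' ω * G ω ∂P := by
    rw [← integral_sub hFG hF'G]; congr 1; funext ω; ring
  have h2 : ∫ ω, F' ω * (G ω - G' ω) ∂P = (∫ ω, F' ω * G ω ∂P) - ∫ ω, F' ω * G' ω ∂P := by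
    rw [← integral_sub hF'G hF'G']; congr 1; funext ω; ring
  have h3 : ∫ ω, (F ω - F' ω) ∂P = (∫ ω, F ω ∂P) - ∫ ω, F' ω ∂P := integral_sub hF hF'
  have h4 : ∫ ω, (G ω - G' ω) ∂P = (∫ ω, G ω ∂P) - ∫ ω, G' ω ∂P := integral_sub hG hG'
  rw [h1, h2, h3, h4]; ring

/-- main expectation bound -/
lemma exp_diff_le (P : Measure Ω) [IsProbabilityMeasure P] (W : Ω → ℝ)
    (hW : AEMeasurable W P) (M : ℝ) (hM : 0 < M)
    (hd : Measure.map W P ≤ ENNReal.ofReal M • (volume : Measure ℝ))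
    (w ε : ℝ) (hε : 0 < ε) :
    ∫ ω, (fcl w ε (W ω) - indf w (W ω)) ∂P ≤ M * ε := by
  classical
  set W' := hW.mk W with hW'
  have hWm : Measurable W' := hW.measurable_mk
  have hae : W =ᵐ[P] W' := hW.ae_eq_mk
  have hmap : Measure.map W P = Measure.map W' P := Measure.map_congr hae
  set s : Set ℝ := Set.Ico (w - ε) w with hs
  have hsm : MeasurableSet (W' ⁻¹' s) := hWm measurableSet_Ico
  have h1 : ∫ ω, (fcl w ε (W ω) - indf w (W ω)) ∂P
      = ∫ ω, (fcl w ε (W' ω) - indf w (W' ω)) ∂P := by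
    apply integral_congr_ae
    filter_upwards [hae] with ω h
    rw [h]
  rw [h1]
  have h2 : ∫ ω, (fcl w ε (W' ω) - indf w (W' ω)) ∂P
      ≤ ∫ ω, (W' ⁻¹' s).indicator (fun _ => (1:ℝ)) ω ∂P := by
    have hi1 : Integrable (fun ω => fcl w ε (W' ω) - indf w (W' ω)) P := by
      apply integrable_of_bdd
      · exact ((((fcl_lipschitz hε w).continuous.measurable.comp hWm).sub
          ((measurable_indf w).comp hWm)).aestronglyMeasurable)
      · intro ω
        have h1 := fcl_nonneg w ε (W' ω)
        have h2 := fcl_le_one w ε (W' ω)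
        have h3 := indf_nonneg w (W' ω)
        have h4 := indf_le_one w (W' ω)
        rw [abs_le]; constructor <;> linarith
    apply integral_mono hi1 ((integrable_const (1:ℝ)).indicator hsm)
    intro ω
    have hle := fcl_sub_indf_le (w := w) hε (W' ω)
    show fcl w ε (W' ω) - indf w (W' ω) ≤ (W' ⁻¹' s).indicator (fun _ => (1:ℝ)) ω
    have heq : (W' ⁻¹' s).indicator (fun _ => (1:ℝ)) ω = s.indicator (fun _ => (1:ℝ)) (W' ω) := by
      by_cases hmem : W' ω ∈ s
      · rw [Set.indicator_of_mem hmem, Set.indicator_of_mem (Set.mem_preimage.2 hmem)]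
      · rw [Set.indicator_of_notMem hmem, Set.indicator_of_notMem (fun h => hmem (Set.mem_preimage.1 h))]
    rw [heq, hs]
    exact fcl_sub_indf_le hε (W' ω)
  refine h2.trans ?_
  rw [integral_indicator_const _ hsm, smul_eq_mul, mul_one]
  have h3 : P (W' ⁻¹' s) = Measure.map W P s := by
    rw [hmap, Measure.map_apply hWm measurableSet_Ico]
  rw [measureReal_def, h3]
  have h4 : Measure.map W P s ≤ ENNReal.ofReal M * ENNReal.ofReal ε := by
    calc Measure.map W P s ≤ (ENNReal.ofReal M • (volume : Measure ℝ)) s := hd s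
      _ = ENNReal.ofReal M * volume s := rfl
      _ = ENNReal.ofReal M * ENNReal.ofReal ε := by
          rw [hs, Real.volume_Ico]; norm_num
  calc (Measure.map W P s).toReal ≤ (ENNReal.ofReal M * ENNReal.ofReal ε).toReal :=
        ENNReal.toReal_mono (by finiteness) h4
    _ = M * ε := by
        rw [ENNReal.toReal_mul, ENNReal.toReal_ofReal hM.le, ENNReal.toReal_ofReal hε.le]



theorem statement_15 {Ω : Type*} [MeasurableSpace Ω]
    (P : Measure Ω) [IsProbabilityMeasure P] (U V : Ω → ℝ)
    (hU2 : MemLp U 2 P) (hV2 : MemLp V 2 P)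
    (M : ℝ) (hM : 0 < M)
    (hdU : Measure.map U P ≤ ENNReal.ofReal M • (volume : Measure ℝ))
    (hdV : Measure.map V P ≤ ENNReal.ofReal M • (volume : Measure ℝ))
    (hqa : ∀ (f g : ℝ → ℝ) (Lf Lg : ℝ≥0), LipschitzWith Lf f → LipschitzWith Lg g →
      |covP P (f ∘ U) (g ∘ V)| ≤ (Lf : ℝ) * (Lg : ℝ) * |covP P U V|) :
    ∀ u v : ℝ,
      |covP P (fun ω => if u ≤ U ω then (1 : ℝ) else 0)
          (fun ω => if v ≤ V ω then (1 : ℝ) else 0)| ≤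
        3 * M ^ ((2 : ℝ) / 3) * |covP P U V| ^ ((1 : ℝ) / 3) := by
  intro u v
  have hUm : AEMeasurable U P := hU2.aestronglyMeasurable.aemeasurable
  have hVm : AEMeasurable V P := hV2.aestronglyMeasurable.aemeasurable
  set C := |covP P U V| with hCdef
  have hC0 : 0 ≤ C := abs_nonneg _
  set IU : Ω → ℝ := fun ω => indf u (U ω) with hIU
  set IV : Ω → ℝ := fun ω => indf v (V ω) with hIV
  -- integrability helpers
  have hIUsm : AEStronglyMeasurable IU P :=
    ((measurable_indf u).comp_aemeasurable hUm).aestronglyMeasurable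
  have hIVsm : AEStronglyMeasurable IV P :=
    ((measurable_indf v).comp_aemeasurable hVm).aestronglyMeasurable
  have hIUbd : ∀ ω, 0 ≤ IU ω ∧ IU ω ≤ 1 := fun ω => ⟨indf_nonneg _ _, indf_le_one _ _⟩
  have hIVbd : ∀ ω, 0 ≤ IV ω ∧ IV ω ≤ 1 := fun ω => ⟨indf_nonneg _ _, indf_le_one _ _⟩
  have habs : ∀ x : ℝ, 0 ≤ x → x ≤ 1 → |x| ≤ 1 := by
    intro x h1 h2; rw [abs_of_nonneg h1]; exact h2
  have hIUint : Integrable IU P :=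
    integrable_of_bdd hIUsm (fun ω => habs _ (hIUbd ω).1 (hIUbd ω).2)
  have hIVint : Integrable IV P :=
    integrable_of_bdd hIVsm (fun ω => habs _ (hIVbd ω).1 (hIVbd ω).2)
  -- mean of a [0,1]-valued function is in [0,1]
  have hmean : ∀ F : Ω → ℝ, Integrable F P → (∀ ω, 0 ≤ F ω ∧ F ω ≤ 1) →
      ∀ ω, |F ω - ∫ ω', F ω' ∂P| ≤ 1 := by
    intro F hFi hFb ω
    have h1 : 0 ≤ ∫ ω', F ω' ∂P := integral_nonneg (fun ω' => (hFb ω').1)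
    have h2 : (∫ ω', F ω' ∂P) ≤ 1 := by
      calc (∫ ω', F ω' ∂P) ≤ ∫ _ω', (1:ℝ) ∂P :=
            integral_mono hFi (integrable_const 1) (fun ω' => (hFb ω').2)
        _ = 1 := by simp
    have := (hFb ω).1; have := (hFb ω).2
    rw [abs_le]; constructor <;> linarith
  -- key estimate for every ε > 0
  have key : ∀ ε : ℝ, 0 < ε → |covP P IU IV| ≤ ε⁻¹ * ε⁻¹ * C + (M * ε + M * ε) := by
    intro ε hε
    set FU : Ω → ℝ := fun ω => fcl u ε (U ω) with hFU
    set GV : Ω → ℝ := fun ω => fcl v ε (V ω) with hGV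
    have hFUsm : AEStronglyMeasurable FU P :=
      ((fcl_lipschitz hε u).continuous.measurable.comp_aemeasurable hUm).aestronglyMeasurable
    have hGVsm : AEStronglyMeasurable GV P :=
      ((fcl_lipschitz hε v).continuous.measurable.comp_aemeasurable hVm).aestronglyMeasurable
    have hFUbd : ∀ ω, 0 ≤ FU ω ∧ FU ω ≤ 1 := fun ω => ⟨fcl_nonneg _ _ _, fcl_le_one _ _ _⟩
    have hGVbd : ∀ ω, 0 ≤ GV ω ∧ GV ω ≤ 1 := fun ω => ⟨fcl_nonneg _ _ _, fcl_le_one _ _ _⟩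
    have hFUint : Integrable FU P :=
      integrable_of_bdd hFUsm (fun ω => habs _ (hFUbd ω).1 (hFUbd ω).2)
    have hGVint : Integrable GV P :=
      integrable_of_bdd hGVsm (fun ω => habs _ (hGVbd ω).1 (hGVbd ω).2)
    have hprod : ∀ (F G : Ω → ℝ), AEStronglyMeasurable F P → AEStronglyMeasurable G P →
        (∀ ω, 0 ≤ F ω ∧ F ω ≤ 1) → (∀ ω, 0 ≤ G ω ∧ G ω ≤ 1) →
        Integrable (fun ω => F ω * G ω) P := by
      intro F G hFsm hGsm hFb hGb
      apply integrable_of_bdd (hFsm.mul hGsm)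
      intro ω
      show |F ω * G ω| ≤ 1
      rw [abs_mul]
      calc |F ω| * |G ω| ≤ 1 * 1 :=
            mul_le_mul (habs _ (hFb ω).1 (hFb ω).2) (habs _ (hGb ω).1 (hGb ω).2)
              (abs_nonneg _) zero_le_one
        _ = 1 := by norm_num
    -- decomposition
    have hdec := covP_decomp P IU FU IV GV hIUint hFUint hIVint hGVint
      (hprod _ _ hIUsm hIVsm hIUbd hIVbd) (hprod _ _ hFUsm hIVsm hFUbd hIVbd)
      (hprod _ _ hFUsm hGVsm hFUbd hGVbd)
    -- term 1
    have ht1 : |covP P (fun ω => IU ω - FU ω) IV| ≤ M * ε := by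
      have h1 : |covP P (fun ω => IU ω - FU ω) IV| ≤ ∫ ω, |IU ω - FU ω| ∂P := by
        apply abs_covP_le P _ _ _ (hIUint.sub hFUint) (hmean IV hIVint hIVbd)
        · apply integrable_of_bdd ((hIUsm.sub hFUsm).mul hIVsm)
          intro ω
          show |(IU ω - FU ω) * IV ω| ≤ 1
          rw [abs_mul]
          have hd : |IU ω - FU ω| ≤ 1 := by
            have := (hIUbd ω).1; have := (hIUbd ω).2
            have := (hFUbd ω).1; have := (hFUbd ω).2
            rw [abs_le]; constructor <;> linarith
          calc |IU ω - FU ω| * |IV ω| ≤ 1 * 1 :=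
                mul_le_mul hd (habs _ (hIVbd ω).1 (hIVbd ω).2) (abs_nonneg _) zero_le_one
            _ = 1 := by norm_num
      have h2 : ∫ ω, |IU ω - FU ω| ∂P = ∫ ω, (fcl u ε (U ω) - indf u (U ω)) ∂P := by
        apply integral_congr_ae
        apply Eventually.of_forall
        intro ω
        show |IU ω - FU ω| = fcl u ε (U ω) - indf u (U ω)
        rw [abs_sub_comm, abs_of_nonneg (by linarith [indf_le_fcl (w := u) hε (U ω)])]
      exact h1.trans (h2.le.trans (exp_diff_le P U hUm M hM hdU u ε hε))
    -- term 2
    have ht2 : |covP P FU (fun ω => IV ω - GV ω)| ≤ M * ε := by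
      rw [covP_comm]
      have h1 : |covP P (fun ω => IV ω - GV ω) FU| ≤ ∫ ω, |IV ω - GV ω| ∂P := by
        apply abs_covP_le P _ _ _ (hIVint.sub hGVint) (hmean FU hFUint hFUbd)
        · apply integrable_of_bdd ((hIVsm.sub hGVsm).mul hFUsm)
          intro ω
          show |(IV ω - GV ω) * FU ω| ≤ 1
          rw [abs_mul]
          have hd : |IV ω - GV ω| ≤ 1 := by
            have := (hIVbd ω).1; have := (hIVbd ω).2
            have := (hGVbd ω).1; have := (hGVbd ω).2
            rw [abs_le]; constructor <;> linarith
          calc |IV ω - GV ω| * |FU ω| ≤ 1 * 1 :=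
                mul_le_mul hd (habs _ (hFUbd ω).1 (hFUbd ω).2) (abs_nonneg _) zero_le_one
            _ = 1 := by norm_num
      have h2 : ∫ ω, |IV ω - GV ω| ∂P = ∫ ω, (fcl v ε (V ω) - indf v (V ω)) ∂P := by
        apply integral_congr_ae
        apply Eventually.of_forall
        intro ω
        show |IV ω - GV ω| = fcl v ε (V ω) - indf v (V ω)
        rw [abs_sub_comm, abs_of_nonneg (by linarith [indf_le_fcl (w := v) hε (V ω)])]
      exact h1.trans (h2.le.trans (exp_diff_le P V hVm M hM hdV v ε hε))
    -- term 3 via quasi-association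
    have ht3 : |covP P FU GV| ≤ ε⁻¹ * ε⁻¹ * C := by
      have := hqa (fcl u ε) (fcl v ε) (ε⁻¹).toNNReal (ε⁻¹).toNNReal
        (fcl_lipschitz hε u) (fcl_lipschitz hε v)
      rw [Real.coe_toNNReal _ (by positivity)] at this
      simpa [Function.comp_def] using this
    calc |covP P IU IV| ≤ |covP P (fun ω => IU ω - FU ω) IV| + |covP P FU (fun ω => IV ω - GV ω)|
          + |covP P FU GV| := by
          rw [hdec]
          exact (abs_add_le _ _).trans (add_le_add_left (abs_add_le _ _) _)
      _ ≤ M * ε + M * ε + ε⁻¹ * ε⁻¹ * C := add_le_add (add_le_add ht1 ht2) ht3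
      _ = ε⁻¹ * ε⁻¹ * C + (M * ε + M * ε) := by ring
  -- conclude
  show |covP P IU IV| ≤ 3 * M ^ ((2:ℝ)/3) * C ^ ((1:ℝ)/3)
  rcases eq_or_lt_of_le hC0 with hC | hC
  · -- C = 0
    have hz : |covP P IU IV| ≤ 0 := by
      by_contra h
      push_neg at h
      have hε : 0 < |covP P IU IV| / (4 * M) := by positivity
      have := key _ hε
      rw [← hC] at this
      have h4 : M * (|covP P IU IV| / (4 * M)) = |covP P IU IV| / 4 := by
        field_simp
      rw [h4] at this
      simp at this
      linarith
    have : C ^ ((1:ℝ)/3) = 0 := by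
      rw [← hC, Real.zero_rpow (by norm_num)]
    rw [this]
    simpa using hz
  · -- C > 0
    set ε : ℝ := (C / M) ^ ((1:ℝ)/3) with hεdef
    have hε : 0 < ε := Real.rpow_pos_of_pos (div_pos hC hM) _
    have hkey := key ε hε
    set a : ℝ := M ^ ((1:ℝ)/3) with hadef
    set b : ℝ := C ^ ((1:ℝ)/3) with hbdef
    have ha : 0 < a := Real.rpow_pos_of_pos hM _
    have hb : 0 < b := Real.rpow_pos_of_pos hC _
    have ha3 : a ^ (3:ℕ) = M := by
      rw [hadef, ← Real.rpow_natCast (M ^ ((1:ℝ)/3)) 3, ← Real.rpow_mul hM.le]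
      norm_num
    have hb3 : b ^ (3:ℕ) = C := by
      rw [hbdef, ← Real.rpow_natCast (C ^ ((1:ℝ)/3)) 3, ← Real.rpow_mul hC0]
      norm_num
    have hεeq : ε = b / a := by
      rw [hεdef, Real.div_rpow hC0 hM.le]
    have hM23 : M ^ ((2:ℝ)/3) = a ^ (2:ℕ) := by
      rw [hadef, ← Real.rpow_natCast (M ^ ((1:ℝ)/3)) 2, ← Real.rpow_mul hM.le]
      norm_num
    have hsum : ε⁻¹ * ε⁻¹ * C + (M * ε + M * ε) = 3 * a ^ (2:ℕ) * b := by
      rw [hεeq, ← hb3, ← ha3]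
      field_simp
      ring
    rw [hM23, ← hsum]
    exact hkey

end
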